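/- (Weak maximum principle) Let ν be a symmetric Lévy measure on ℝⁿ with ν(ℝⁿ∖{0}) > 0 and Ω ⊆ ℝⁿ a nonempty bounded open set. If u is a weak solution of Lu = f in Ω, u = g on ℝⁿ∖Ω with f ≥ 0 a.e. on Ω and g ≥ 0 a.e. on ℝⁿ∖Ω, then u ≥ 0 a.e. on ℝⁿ. -/

import Mathlib

open MeasureTheory Filter Set Topology
open scoped ENNReal Topology Pointwise Classical

noncomputable section

abbrev Eucl (n : ℕ) : Type := EuclideanSpace ℝ (Fin n)

/-- A symmetric Lévy measure on ℝⁿ: ν({0}) = 0, ν(−A) = ν(A) for Borel A, and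
∫ min(1,|y|²) dν < ∞. -/
def IsSymmLevy {n : ℕ} (ν : Measure (Eucl n)) : Prop :=
  ν {0} = 0 ∧ (∀ A : Set (Eucl n), MeasurableSet A → ν (-A) = ν A) ∧
    (∫⁻ y, ENNReal.ofReal (min 1 (‖y‖ ^ 2)) ∂ν) < ⊤

/-- The truncated nonlocal operator: ∫_{|y| ≥ ε} (u(x) − u(x+y)) dν(y). -/
def truncL {n : ℕ} (ν : Measure (Eucl n)) (u : Eucl n → ℝ) (x : Eucl n) (ε : ℝ) : ℝ :=
  ∫ y in {y : Eucl n | ε ≤ ‖y‖}, (u x - u (x + y)) ∂ν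

/-- `Lu(x)` is well defined with value `l`: the integrands are ν-integrable away from the
origin, and the principal value limit exists and equals `l`. -/
def HasLAt {n : ℕ} (ν : Measure (Eucl n)) (u : Eucl n → ℝ) (x : Eucl n) (l : ℝ) : Prop :=
  (∀ ε : ℝ, 0 < ε → IntegrableOn (fun y => u x - u (x + y)) {y : Eucl n | ε ≤ ‖y‖} ν) ∧
  Tendsto (truncL ν u x) (𝓝[>] (0:ℝ)) (𝓝 l)

/-- Squared norm of the generalized Sobolev space V_ν^D(ℝⁿ). -/
def sobSq {n : ℕ} (ν : Measure (Eucl n)) (D : Set (Eucl n)) (u : Eucl n → ℝ) : ℝ≥0∞ :=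
  (∫⁻ x in D, ENNReal.ofReal (u x ^ 2)) +
    (1/2) * ∫⁻ y in D, ∫⁻ z, ENNReal.ofReal ((u y - u (y + z)) ^ 2) ∂ν

/-- Membership in V_ν^D(ℝⁿ). -/
def MemV {n : ℕ} (ν : Measure (Eucl n)) (D : Set (Eucl n)) (u : Eucl n → ℝ) : Prop :=
  Measurable u ∧ sobSq ν D u < ⊤

/-- Membership in H_ν^D(ℝⁿ): members of V_ν^D vanishing a.e. outside D. -/
def MemH {n : ℕ} (ν : Measure (Eucl n)) (D : Set (Eucl n)) (u : Eucl n → ℝ) : Prop :=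
  MemV ν D u ∧ ∀ᵐ x ∂(volume : Measure (Eucl n)), x ∉ D → u x = 0

/-- The quadratic form ⟨u,u⟩_ν (with values in [0,∞]). -/
def formQ {n : ℕ} (ν : Measure (Eucl n)) (u : Eucl n → ℝ) : ℝ≥0∞ :=
  (1/2) * ∫⁻ y, ∫⁻ z, ENNReal.ofReal ((u y - u (y + z)) ^ 2) ∂ν

/-- The bilinear form ⟨u,v⟩_ν. -/
def formB {n : ℕ} (ν : Measure (Eucl n)) (u v : Eucl n → ℝ) : ℝ :=
  (1/2) * ∫ y, (∫ z, (u y - u (y + z)) * (v y - v (y + z)) ∂ν)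

/-- Weak solution of Lu = f in Ω, u = g on ℝⁿ∖Ω. -/
def IsWeakSol {n : ℕ} (ν : Measure (Eucl n)) (Ω : Set (Eucl n))
    (f g u : Eucl n → ℝ) : Prop :=
  MemV ν Ω u ∧ (∀ᵐ x ∂(volume : Measure (Eucl n)), x ∉ Ω → u x = g x) ∧
  ∀ φ : Eucl n → ℝ, MemH ν Ω φ → formB ν u φ = ∫ x in Ω, f x * φ x

end

noncomputable section

lemma key1 (a b : ℝ) : (a - b) * (max (-a) 0 - max (-b) 0) ≤ -(max (-a) 0 - max (-b) 0)^2 := by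
  rcases le_total a 0 with ha | ha <;> rcases le_total b 0 with hb | hb <;>
    simp [max_eq_left, max_eq_right, neg_nonneg.mpr, neg_nonpos.mpr, ha, hb] <;> nlinarith

lemma key2 (a b : ℝ) : |max (-a) 0 - max (-b) 0| ≤ |a - b| := by
  have h := abs_max_sub_max_le_abs (-a) (-b) 0
  have e : |-a - -b| = |a - b| := by rw [← abs_neg]; ring_nf
  rw [e] at h
  exact h

lemma levy_sigmaFinite {n : ℕ} (ν : Measure (EuclideanSpace ℝ (Fin n)))
    (h0 : ν {0} = 0)
    (hfin : (∫⁻ y, ENNReal.ofReal (min 1 (‖y‖ ^ 2)) ∂ν) < ⊤) : SigmaFinite ν := by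
  constructor
  constructor
  refine { set := fun k => {y | (1:ℝ)/(k+1) ≤ ‖y‖} ∪ {0}, set_mem := fun _ => trivial,
           finite := ?_, spanning := ?_ }
  · intro k
    set c : ℝ := (1:ℝ)/(k+1) with hc
    have hcpos : 0 < c := by positivity
    have hmeas : MeasurableSet {y : EuclideanSpace ℝ (Fin n) | c ≤ ‖y‖} :=
      measurableSet_le measurable_const measurable_norm
    have hb : ENNReal.ofReal (min 1 (c^2)) * ν {y | c ≤ ‖y‖} ≤
        ∫⁻ y, ENNReal.ofReal (min 1 (‖y‖ ^ 2)) ∂ν := by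
      rw [← setLIntegral_const]
      refine le_trans (setLIntegral_mono' hmeas fun y hy => ?_) (setLIntegral_le_lintegral _ _)
      exact ENNReal.ofReal_le_ofReal (min_le_min le_rfl (by nlinarith [hy.out, norm_nonneg y]))
    have hne : ENNReal.ofReal (min 1 (c^2)) ≠ 0 := by
      simp only [ne_eq, ENNReal.ofReal_eq_zero, not_le]
      positivity
    have h1 : ν {y | c ≤ ‖y‖} < ⊤ := by
      by_contra h
      rw [not_lt, top_le_iff] at h
      rw [h, ENNReal.mul_top hne] at hb
      exact hfin.ne (top_le_iff.mp hb)
    calc ν ({y | c ≤ ‖y‖} ∪ {0}) ≤ ν {y | c ≤ ‖y‖} + ν {0} := measure_union_le _ _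
      _ < ⊤ := by rw [h0]; simpa using h1
  · apply Set.eq_univ_of_forall
    intro y
    rcases eq_or_ne y 0 with rfl | hy
    · exact Set.mem_iUnion.mpr ⟨0, Set.mem_union_right _ rfl⟩
    · have hny : 0 < ‖y‖ := norm_pos_iff.mpr hy
      obtain ⟨k, hk⟩ := exists_nat_gt (1/‖y‖)
      refine Set.mem_iUnion.mpr ⟨k, Set.mem_union_left _ ?_⟩
      have : (1:ℝ)/(k+1) ≤ 1/(1/‖y‖) := by
        apply one_div_le_one_div_of_le (by positivity)
        linarith
      simpa [one_div_one_div] using this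

lemma ae_translate {n : ℕ} {P : Eucl n → Prop} (hP : MeasurableSet {x | P x})
    (h : ∀ᵐ x ∂(volume : Measure (Eucl n)), P x) (c : Eucl n) :
    ∀ᵐ x ∂(volume : Measure (Eucl n)), P (x + c) := by
  rw [ae_iff] at h ⊢
  have he : {x : Eucl n | ¬ P (x + c)} = (· + c) ⁻¹' {x | ¬ P x} := rfl
  have hc : {x : Eucl n | ¬ P x} = {x | P x}ᶜ := rfl
  rw [he, hc, (measurePreserving_add_right (volume : Measure (Eucl n)) c).measure_preimage
    hP.compl.nullMeasurableSet]
  rw [hc] at h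
  exact h

lemma neg_map_eq {n : ℕ} (ν : Measure (Eucl n))
    (hsym : ∀ A : Set (Eucl n), MeasurableSet A → ν (-A) = ν A) :
    Measure.map (fun z : Eucl n => -z) ν = ν := by
  ext A hA
  rw [Measure.map_apply measurable_neg hA]
  have : (fun z : Eucl n => -z) ⁻¹' A = -A := by
    ext x; simp [Set.mem_neg]
  rw [this, hsym A hA]

lemma switch_ends {n : ℕ} (ν : Measure (Eucl n)) [SigmaFinite ν]
    (hmap : Measure.map (fun z : Eucl n => -z) ν = ν)
    (G : Eucl n → Eucl n → ℝ≥0∞) (hG : Measurable (Function.uncurry G)) :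
    ∫⁻ y, ∫⁻ z, G y (y + z) ∂ν ∂(volume : Measure (Eucl n))
      = ∫⁻ y, ∫⁻ z, G (y + z) y ∂ν ∂(volume : Measure (Eucl n)) := by
  have h1 : AEMeasurable (Function.uncurry fun y z : Eucl n => G y (y + z))
      ((volume : Measure (Eucl n)).prod ν) :=
    (hG.comp (measurable_fst.prodMk (measurable_fst.add measurable_snd))).aemeasurable
  have h2 : AEMeasurable (Function.uncurry fun y z : Eucl n => G (y + z) y)
      ((volume : Measure (Eucl n)).prod ν) :=
    (hG.comp ((measurable_fst.add measurable_snd).prodMk measurable_fst)).aemeasurable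
  rw [lintegral_lintegral_swap h1, lintegral_lintegral_swap h2]
  have step : ∀ z : Eucl n, ∫⁻ y, G y (y + z) ∂(volume : Measure (Eucl n))
      = ∫⁻ x, G (x + -z) x ∂(volume : Measure (Eucl n)) := by
    intro z
    rw [← lintegral_add_right_eq_self (fun x => G (x + -z) x) z]
    congr 1; funext x
    rw [add_neg_cancel_right]
  simp_rw [step]
  have hmeasb : Measurable fun t : Eucl n => ∫⁻ x, G (x + t) x ∂(volume : Measure (Eucl n)) := by
    have : Measurable fun q : Eucl n × Eucl n => G (q.2 + q.1) q.2 :=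
      hG.comp ((measurable_snd.add measurable_fst).prodMk measurable_snd)
    exact this.lintegral_prod_right'
  calc ∫⁻ z, ∫⁻ x, G (x + -z) x ∂(volume : Measure (Eucl n)) ∂ν
      = ∫⁻ z, ∫⁻ x, G (x + z) x ∂(volume : Measure (Eucl n)) ∂ν := by
        conv_rhs => rw [← hmap]
        rw [lintegral_map hmeasb measurable_neg]
    _ = _ := rfl

end

set_option maxHeartbeats 2000000 in
theorem dirichlet_stmt13 {n : ℕ} (ν : Measure (Eucl n)) (hν : IsSymmLevy ν)
    (hν0 : 0 < ν ({0}ᶜ : Set (Eucl n)))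
    (Ω : Set (Eucl n)) (hΩo : IsOpen Ω) (hΩne : Ω.Nonempty)
    (hΩb : Bornology.IsBounded Ω)
    (f g u : Eucl n → ℝ)
    (hf : ∀ᵐ x ∂((volume : Measure (Eucl n)).restrict Ω), 0 ≤ f x)
    (hg : ∀ᵐ x ∂(volume : Measure (Eucl n)), x ∉ Ω → 0 ≤ g x)
    (hu : IsWeakSol ν Ω f g u) :
    ∀ᵐ x ∂(volume : Measure (Eucl n)), 0 ≤ u x := by
  obtain ⟨⟨humeas, husob⟩, hubd, hweak⟩ := hu
  have hΩm : MeasurableSet Ω := hΩo.measurableSet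
  haveI : SigmaFinite ν := levy_sigmaFinite ν hν.1 hν.2.2
  have hmap := neg_map_eq ν hν.2.1
  set w : Eucl n → ℝ := fun x => max (-u x) 0 with hwdef
  have hwmeas : Measurable w := humeas.neg.max measurable_const
  have hwnn : ∀ x, 0 ≤ w x := fun x => le_max_right _ _
  have hwabs : ∀ x, |w x| ≤ |u x| := by
    intro x; simpa using key2 (u x) 0
  have hdiffabs : ∀ y z : Eucl n, |w y - w z| ≤ |u y - u z| := fun y z => key2 (u y) (u z)
  -- w vanishes a.e. outside Ω
  have hw0 : ∀ᵐ x ∂(volume : Measure (Eucl n)), x ∉ Ω → w x = 0 := by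
    filter_upwards [hubd, hg] with x h1 h2 hx
    have hux : 0 ≤ u x := (h1 hx) ▸ (h2 hx)
    exact max_eq_right (by linarith)
  -- w is in H
  have hwH : MemH ν Ω w := by
    refine ⟨⟨hwmeas, lt_of_le_of_lt ?_ husob⟩, hw0⟩
    unfold sobSq
    refine add_le_add (lintegral_mono fun x => ENNReal.ofReal_le_ofReal ?_)
      (mul_le_mul' le_rfl (lintegral_mono fun y => lintegral_mono fun z =>
        ENNReal.ofReal_le_ofReal ?_))
    · nlinarith [hwabs x, abs_nonneg (u x), abs_nonneg (w x), sq_abs (u x), sq_abs (w x)]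
    · nlinarith [hdiffabs y (y + z), abs_nonneg (u y - u (y + z)), abs_nonneg (w y - w (y + z)),
        sq_abs (u y - u (y + z)), sq_abs (w y - w (y + z))]
  have hwk : formB ν u w = ∫ x in Ω, f x * w x := hweak w hwH
  have hRHS : 0 ≤ ∫ x in Ω, f x * w x := by
    apply integral_nonneg_of_ae
    filter_upwards [hf] with x hx
    exact mul_nonneg hx (hwnn x)
  -- measurability battery
  have mups : Measurable fun q : Eucl n × Eucl n => u q.1 - u (q.1 + q.2) :=
    (humeas.comp measurable_fst).sub (humeas.comp (measurable_fst.add measurable_snd))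
  have mwps : Measurable fun q : Eucl n × Eucl n => w q.1 - w (q.1 + q.2) :=
    (hwmeas.comp measurable_fst).sub (hwmeas.comp (measurable_fst.add measurable_snd))
  have mp : Measurable fun q : Eucl n × Eucl n =>
      ENNReal.ofReal (-((u q.1 - u (q.1 + q.2)) * (w q.1 - w (q.1 + q.2)))) :=
    ENNReal.measurable_ofReal.comp (mups.mul mwps).neg
  have mΦ : Measurable fun q : Eucl n × Eucl n =>
      ENNReal.ofReal (|u q.1 - u (q.1 + q.2)| * |w q.1 - w (q.1 + q.2)|) :=
    ENNReal.measurable_ofReal.comp (mups.abs.mul mwps.abs)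
  set I : Eucl n → ℝ≥0∞ :=
    fun y => ∫⁻ z, ENNReal.ofReal (-((u y - u (y + z)) * (w y - w (y + z)))) ∂ν with hIdef
  have hImeas : Measurable I := mp.lintegral_prod_right'
  set L : ℝ≥0∞ := ∫⁻ y, I y ∂(volume : Measure (Eucl n)) with hLdef
  -- pointwise bounds
  have hpΦ : ∀ y z : Eucl n, ENNReal.ofReal (-((u y - u (y + z)) * (w y - w (y + z)))) ≤
      ENNReal.ofReal (|u y - u (y + z)| * |w y - w (y + z)|) := by
    intro y z
    apply ENNReal.ofReal_le_ofReal
    calc -((u y - u (y + z)) * (w y - w (y + z))) ≤ |(u y - u (y + z)) * (w y - w (y + z))| :=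
          neg_le_abs _
      _ = |u y - u (y + z)| * |w y - w (y + z)| := abs_mul _ _
  have hΦsq : ∀ y z : Eucl n, ENNReal.ofReal (|u y - u (y + z)| * |w y - w (y + z)|) ≤
      ENNReal.ofReal ((u y - u (y + z)) ^ 2) := by
    intro y z
    apply ENNReal.ofReal_le_ofReal
    nlinarith [hdiffabs y (y + z), abs_nonneg (u y - u (y + z)), abs_nonneg (w y - w (y + z)),
      sq_abs (u y - u (y + z))]
  -- finiteness over Ω
  have hB : ∫⁻ y in Ω, ∫⁻ z, ENNReal.ofReal ((u y - u (y + z)) ^ 2) ∂ν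
      ∂(volume : Measure (Eucl n)) < ⊤ := by
    by_contra h
    rw [not_lt, top_le_iff] at h
    have : sobSq ν Ω u = ⊤ := by
      unfold sobSq
      rw [h, ENNReal.mul_top (by norm_num), add_top]
    exact husob.ne this
  have hT1 : ∫⁻ y in Ω, ∫⁻ z, ENNReal.ofReal (|u y - u (y + z)| * |w y - w (y + z)|) ∂ν
      ∂(volume : Measure (Eucl n)) < ⊤ :=
    lt_of_le_of_lt (lintegral_mono fun y => lintegral_mono fun z => hΦsq y z) hB
  -- indicators
  set ec : Eucl n → ℝ≥0∞ := fun y => if y ∈ Ω then 0 else 1 with hecdef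
  set eo : Eucl n → ℝ≥0∞ := fun y => if y ∈ Ω then 1 else 0 with heodef
  have mec : Measurable ec := Measurable.ite hΩm measurable_const measurable_const
  have meo : Measurable eo := Measurable.ite hΩm measurable_const measurable_const
  have hecne : ∀ y, ec y ≠ ⊤ := by
    intro y; by_cases h : y ∈ Ω <;> simp [hecdef, h]
  have heone : ∀ y, eo y ≠ ⊤ := by
    intro y; by_cases h : y ∈ Ω <;> simp [heodef, h]
  -- rewriting set integrals with indicators
  have hrestrc : ∀ (F : Eucl n → ℝ≥0∞), Measurable F →
      ∫⁻ y in Ωᶜ, F y ∂(volume : Measure (Eucl n)) =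
        ∫⁻ y, ec y * F y ∂(volume : Measure (Eucl n)) := by
    intro F hF
    rw [← lintegral_indicator hΩm.compl F]
    apply lintegral_congr
    intro y
    by_cases h : y ∈ Ω <;> simp [Set.indicator, hecdef, h]
  have hrestro : ∀ (F : Eucl n → ℝ≥0∞), Measurable F →
      ∫⁻ y in Ω, F y ∂(volume : Measure (Eucl n)) =
        ∫⁻ y, eo y * F y ∂(volume : Measure (Eucl n)) := by
    intro F hF
    rw [← lintegral_indicator hΩm F]
    apply lintegral_congr
    intro y
    by_cases h : y ∈ Ω <;> simp [Set.indicator, heodef, h]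
  have mΦinner : Measurable fun y => ∫⁻ z,
      ENNReal.ofReal (|u y - u (y + z)| * |w y - w (y + z)|) ∂ν := mΦ.lintegral_prod_right'
  -- move indicator inside
  have hT2eq : ∫⁻ y in Ωᶜ, ∫⁻ z, ENNReal.ofReal (|u y - u (y + z)| * |w y - w (y + z)|) ∂ν
        ∂(volume : Measure (Eucl n))
      = ∫⁻ y, ∫⁻ z, ec y * ENNReal.ofReal (|u y - u (y + z)| * |w y - w (y + z)|) ∂ν
        ∂(volume : Measure (Eucl n)) := by
    rw [hrestrc _ mΦinner]
    apply lintegral_congr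
    intro y
    rw [lintegral_const_mul' _ _ (hecne y)]
  -- the symmetry switch
  have hswitch : ∫⁻ y, ∫⁻ z, ec y * ENNReal.ofReal (|u y - u (y + z)| * |w y - w (y + z)|) ∂ν
        ∂(volume : Measure (Eucl n))
      = ∫⁻ y, ∫⁻ z, ec (y + z) * ENNReal.ofReal (|u y - u (y + z)| * |w y - w (y + z)|) ∂ν
        ∂(volume : Measure (Eucl n)) := by
    have hGm : Measurable (Function.uncurry fun a b : Eucl n =>
        ec a * ENNReal.ofReal (|u a - u b| * |w a - w b|)) :=
      (mec.comp measurable_fst).mul (ENNReal.measurable_ofReal.comp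
        (((humeas.comp measurable_fst).sub (humeas.comp measurable_snd)).abs.mul
          ((hwmeas.comp measurable_fst).sub (hwmeas.comp measurable_snd)).abs))
    have h := switch_ends ν hmap
      (fun a b => ec a * ENNReal.ofReal (|u a - u b| * |w a - w b|)) hGm
    calc ∫⁻ y, ∫⁻ z, ec y * ENNReal.ofReal (|u y - u (y + z)| * |w y - w (y + z)|) ∂ν
          ∂(volume : Measure (Eucl n))
        = ∫⁻ y, ∫⁻ z, ec (y + z) * ENNReal.ofReal (|u (y + z) - u y| * |w (y + z) - w y|) ∂ν
          ∂(volume : Measure (Eucl n)) := h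
      _ = _ := by
          apply lintegral_congr; intro y; apply lintegral_congr; intro z
          rw [abs_sub_comm (u (y + z)) (u y), abs_sub_comm (w (y + z)) (w y)]
  -- pointwise splitting
  have key_le : ∀ y z : Eucl n,
      ec (y + z) * ENNReal.ofReal (|u y - u (y + z)| * |w y - w (y + z)|) ≤
        eo y * ENNReal.ofReal (|u y - u (y + z)| * |w y - w (y + z)|) +
          ec y * (ec (y + z) * ENNReal.ofReal (|u y - u (y + z)| * |w y - w (y + z)|)) := by
    intro y z
    by_cases h : y ∈ Ω
    · by_cases h2 : y + z ∈ Ω <;> simp [hecdef, heodef, h, h2]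
    · by_cases h2 : y + z ∈ Ω <;> simp [hecdef, heodef, h, h2]
  -- measurable pieces for the split
  have mA : Measurable fun q : Eucl n × Eucl n =>
      eo q.1 * ENNReal.ofReal (|u q.1 - u (q.1 + q.2)| * |w q.1 - w (q.1 + q.2)|) :=
    (meo.comp measurable_fst).mul mΦ
  have mB : Measurable fun q : Eucl n × Eucl n =>
      ec q.1 * (ec (q.1 + q.2) *
        ENNReal.ofReal (|u q.1 - u (q.1 + q.2)| * |w q.1 - w (q.1 + q.2)|)) :=
    (mec.comp measurable_fst).mul ((mec.comp (measurable_fst.add measurable_snd)).mul mΦ)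
  have hT2le : ∫⁻ y, ∫⁻ z, ec (y + z) *
        ENNReal.ofReal (|u y - u (y + z)| * |w y - w (y + z)|) ∂ν ∂(volume : Measure (Eucl n)) ≤
      (∫⁻ y, ∫⁻ z, eo y * ENNReal.ofReal (|u y - u (y + z)| * |w y - w (y + z)|) ∂ν
        ∂(volume : Measure (Eucl n))) +
      ∫⁻ y, ∫⁻ z, ec y * (ec (y + z) *
        ENNReal.ofReal (|u y - u (y + z)| * |w y - w (y + z)|)) ∂ν
        ∂(volume : Measure (Eucl n)) := by
    calc ∫⁻ y, ∫⁻ z, ec (y + z) *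
          ENNReal.ofReal (|u y - u (y + z)| * |w y - w (y + z)|) ∂ν ∂(volume : Measure (Eucl n))
        ≤ ∫⁻ y, ∫⁻ z, (eo y * ENNReal.ofReal (|u y - u (y + z)| * |w y - w (y + z)|) +
            ec y * (ec (y + z) * ENNReal.ofReal (|u y - u (y + z)| * |w y - w (y + z)|))) ∂ν
            ∂(volume : Measure (Eucl n)) :=
          lintegral_mono fun y => lintegral_mono fun z => key_le y z
      _ = _ := by
          have e1 : ∀ y : Eucl n, ∫⁻ z,
              (eo y * ENNReal.ofReal (|u y - u (y + z)| * |w y - w (y + z)|) +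
                ec y * (ec (y + z) * ENNReal.ofReal (|u y - u (y + z)| * |w y - w (y + z)|)))
                ∂ν =
              (∫⁻ z, eo y * ENNReal.ofReal (|u y - u (y + z)| * |w y - w (y + z)|) ∂ν) +
              ∫⁻ z, ec y * (ec (y + z) *
                ENNReal.ofReal (|u y - u (y + z)| * |w y - w (y + z)|)) ∂ν := by
            intro y
            exact lintegral_add_left (mA.comp measurable_prodMk_left) _
          simp_rw [e1]
          exact lintegral_add_left mA.lintegral_prod_right' _
  -- the J term vanishes
  have hJ : ∫⁻ y, ∫⁻ z, ec y * (ec (y + z) *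
      ENNReal.ofReal (|u y - u (y + z)| * |w y - w (y + z)|)) ∂ν
      ∂(volume : Measure (Eucl n)) = 0 := by
    have hmB' : AEMeasurable (Function.uncurry fun y z : Eucl n => ec y * (ec (y + z) *
        ENNReal.ofReal (|u y - u (y + z)| * |w y - w (y + z)|)))
        ((volume : Measure (Eucl n)).prod ν) := mB.aemeasurable
    rw [lintegral_lintegral_swap hmB']
    have houtm : MeasurableSet {x : Eucl n | x ∉ Ω → w x = 0} := by
      have he : {x : Eucl n | x ∉ Ω → w x = 0} = Ω ∪ {x | w x = 0} := by
        ext x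
        by_cases h : x ∈ Ω <;> simp [h]
      rw [he]
      exact hΩm.union (hwmeas (measurableSet_singleton 0))
    have hz : ∀ z : Eucl n, ∫⁻ y, ec y * (ec (y + z) *
        ENNReal.ofReal (|u y - u (y + z)| * |w y - w (y + z)|))
        ∂(volume : Measure (Eucl n)) = 0 := by
      intro z
      have h2 : ∀ᵐ y ∂(volume : Measure (Eucl n)), (y + z) ∉ Ω → w (y + z) = 0 :=
        ae_translate houtm hw0 z
      rw [← lintegral_zero]
      apply lintegral_congr_ae
      filter_upwards [hw0, h2] with y hy1 hy2
      by_cases hyy : y ∈ Ω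
      · simp [hecdef, hyy]
      · by_cases hzz : y + z ∈ Ω
        · simp [hecdef, hzz]
        · simp [hy1 hyy, hy2 hzz]
    simp_rw [hz]
    simp
  -- finiteness of L
  have hT1' : ∫⁻ y, ∫⁻ z, eo y *
        ENNReal.ofReal (|u y - u (y + z)| * |w y - w (y + z)|) ∂ν
        ∂(volume : Measure (Eucl n))
      = ∫⁻ y in Ω, ∫⁻ z, ENNReal.ofReal (|u y - u (y + z)| * |w y - w (y + z)|) ∂ν
        ∂(volume : Measure (Eucl n)) := by
    rw [hrestro _ mΦinner]
    apply lintegral_congr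
    intro y
    rw [lintegral_const_mul' _ _ (heone y)]
  have hLfin : L < ⊤ := by
    have step1 : L ≤ ∫⁻ y, ∫⁻ z,
        ENNReal.ofReal (|u y - u (y + z)| * |w y - w (y + z)|) ∂ν
        ∂(volume : Measure (Eucl n)) := by
      rw [hLdef]
      exact lintegral_mono fun y => lintegral_mono fun z => hpΦ y z
    have step2 : ∫⁻ y, ∫⁻ z, ENNReal.ofReal (|u y - u (y + z)| * |w y - w (y + z)|) ∂ν
          ∂(volume : Measure (Eucl n))
        = (∫⁻ y in Ω, ∫⁻ z, ENNReal.ofReal (|u y - u (y + z)| * |w y - w (y + z)|) ∂ν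
            ∂(volume : Measure (Eucl n))) +
          ∫⁻ y in Ωᶜ, ∫⁻ z, ENNReal.ofReal (|u y - u (y + z)| * |w y - w (y + z)|) ∂ν
            ∂(volume : Measure (Eucl n)) := (lintegral_add_compl _ hΩm).symm
    have step3 : ∫⁻ y in Ωᶜ, ∫⁻ z,
          ENNReal.ofReal (|u y - u (y + z)| * |w y - w (y + z)|) ∂ν
          ∂(volume : Measure (Eucl n))
        ≤ ∫⁻ y in Ω, ∫⁻ z, ENNReal.ofReal (|u y - u (y + z)| * |w y - w (y + z)|) ∂ν
          ∂(volume : Measure (Eucl n)) := by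
      rw [hT2eq, hswitch]
      calc _ ≤ _ := hT2le
        _ = _ := by rw [hJ, add_zero, hT1']
    calc L ≤ _ := step1
      _ = _ := step2
      _ ≤ _ + _ := add_le_add le_rfl step3
      _ < ⊤ := by
          rw [← two_mul]
          exact ENNReal.mul_lt_top (by norm_num) hT1
  -- rewrite the Bochner integral via lintegrals
  have hFy : ∀ y : Eucl n, (∫ z, (u y - u (y + z)) * (w y - w (y + z)) ∂ν) = -(I y).toReal := by
    intro y
    have hnn : 0 ≤ᵐ[ν] fun z => -((u y - u (y + z)) * (w y - w (y + z))) := by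
      apply Eventually.of_forall
      intro z
      have h : (u y - u (y + z)) * (w y - w (y + z)) ≤ -(w y - w (y + z))^2 :=
        key1 (u y) (u (y + z))
      show (0:ℝ) ≤ -((u y - u (y + z)) * (w y - w (y + z)))
      nlinarith [sq_nonneg (w y - w (y + z))]
    have hms : AEStronglyMeasurable (fun z => -((u y - u (y + z)) * (w y - w (y + z)))) ν := by
      apply Measurable.aestronglyMeasurable
      have h1 : Measurable fun z : Eucl n => u (y + z) := humeas.comp (measurable_const.add measurable_id)
      have h2 : Measurable fun z : Eucl n => w (y + z) := hwmeas.comp (measurable_const.add measurable_id)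
      exact ((measurable_const.sub h1).mul (measurable_const.sub h2)).neg
    have e1 : ∫ z, (u y - u (y + z)) * (w y - w (y + z)) ∂ν
        = -∫ z, -((u y - u (y + z)) * (w y - w (y + z))) ∂ν := by
      rw [integral_neg, neg_neg]
    rw [e1, integral_eq_lintegral_of_nonneg_ae hnn hms]
  have hIeq : ∫ y, (∫ z, (u y - u (y + z)) * (w y - w (y + z)) ∂ν)
      ∂(volume : Measure (Eucl n)) = -(L.toReal) := by
    have h1 : ∫ y, (∫ z, (u y - u (y + z)) * (w y - w (y + z)) ∂ν)
        ∂(volume : Measure (Eucl n)) = ∫ y, -(I y).toReal ∂(volume : Measure (Eucl n)) :=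
      integral_congr_ae (Eventually.of_forall hFy)
    rw [h1, integral_neg, integral_toReal hImeas.aemeasurable (ae_lt_top hImeas hLfin.ne)]
  have hL0 : L = 0 := by
    have h3 : formB ν u w = (1/2 : ℝ) * (-(L.toReal)) := by
      unfold formB
      rw [hIeq]
    rw [hwk] at h3
    have h4 : L.toReal = 0 := by
      have := ENNReal.toReal_nonneg (a := L)
      linarith
    rcases (ENNReal.toReal_eq_zero_iff L).mp h4 with h | h
    · exact h
    · exact absurd h hLfin.ne
  -- the w-difference double integral vanishes
  have mq : Measurable fun q : Eucl n × Eucl n =>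
      ENNReal.ofReal ((w q.1 - w (q.1 + q.2)) ^ 2) :=
    ENNReal.measurable_ofReal.comp (mwps.pow measurable_const)
  have hq0 : ∫⁻ y, ∫⁻ z, ENNReal.ofReal ((w y - w (y + z)) ^ 2) ∂ν
      ∂(volume : Measure (Eucl n)) = 0 := by
    apply le_antisymm _ zero_le
    rw [← hL0, hLdef]
    refine lintegral_mono fun y => lintegral_mono fun z => ENNReal.ofReal_le_ofReal ?_
    have h : (u y - u (y + z)) * (w y - w (y + z)) ≤ -(w y - w (y + z))^2 :=
      key1 (u y) (u (y + z))
    linarith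
  have hq0' : ∫⁻ z, ∫⁻ y, ENNReal.ofReal ((w y - w (y + z)) ^ 2)
      ∂(volume : Measure (Eucl n)) ∂ν = 0 := by
    rw [← lintegral_lintegral_swap mq.aemeasurable]
    exact hq0
  have hmy : Measurable fun z : Eucl n => ∫⁻ y, ENNReal.ofReal ((w y - w (y + z)) ^ 2)
      ∂(volume : Measure (Eucl n)) := by
    have h : Measurable fun q : Eucl n × Eucl n =>
        ENNReal.ofReal ((w q.2 - w (q.2 + q.1)) ^ 2) := by
      exact ENNReal.measurable_ofReal.comp
        (((hwmeas.comp measurable_snd).sub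
          (hwmeas.comp (measurable_snd.add measurable_fst))).pow measurable_const)
    exact h.lintegral_prod_right'
  have haez : ∀ᵐ z ∂ν, ∫⁻ y, ENNReal.ofReal ((w y - w (y + z)) ^ 2)
      ∂(volume : Measure (Eucl n)) = 0 := by
    have := (lintegral_eq_zero_iff hmy).mp hq0'
    filter_upwards [this] with z hz
    exact hz
  -- extract a nonzero translation
  have hz₀ : ∃ z₀ : Eucl n, z₀ ≠ 0 ∧
      ∀ᵐ y ∂(volume : Measure (Eucl n)), w (y + z₀) = w y := by
    by_contra hcon
    simp only [not_exists, not_and] at hcon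
    have hsub : ({0}ᶜ : Set (Eucl n)) ⊆
        {z : Eucl n | ¬ (∫⁻ y, ENNReal.ofReal ((w y - w (y + z)) ^ 2)
          ∂(volume : Measure (Eucl n)) = 0)} := by
      intro z hz h0
      apply hcon z hz
      have hmyz : Measurable fun y : Eucl n => ENNReal.ofReal ((w y - w (y + z)) ^ 2) :=
        ENNReal.measurable_ofReal.comp
          ((hwmeas.sub (hwmeas.comp (measurable_add_const z))).pow measurable_const)
      have h1 := (lintegral_eq_zero_iff hmyz).mp h0
      filter_upwards [h1] with y hy
      have h2 : ENNReal.ofReal ((w y - w (y + z)) ^ 2) = 0 := hy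
      have h3 : (w y - w (y + z)) ^ 2 ≤ 0 := ENNReal.ofReal_eq_zero.mp h2
      have h4 : (w y - w (y + z)) ^ 2 = 0 := le_antisymm h3 (sq_nonneg _)
      have h5 : w y - w (y + z) = 0 := by
        exact pow_eq_zero_iff (by norm_num) |>.mp h4
      linarith
    have : ν ({0}ᶜ : Set (Eucl n)) = 0 := measure_mono_null hsub (ae_iff.mp haez)
    exact absurd this hν0.ne'
  obtain ⟨z₀, hz₀ne, hz₀ae⟩ := hz₀
  -- iterate translation invariance
  have hiter : ∀ k : ℕ, ∀ᵐ y ∂(volume : Measure (Eucl n)), w (y + k • z₀) = w y := by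
    intro k
    induction k with
    | zero => simp
    | succ k ih =>
      have hPm : MeasurableSet {x : Eucl n | w (x + z₀) = w x} :=
        measurableSet_eq_fun (hwmeas.comp (measurable_add_const z₀)) hwmeas
      have htr := ae_translate hPm hz₀ae (k • z₀)
      filter_upwards [ih, htr] with y h1 h2
      have e : y + (k + 1) • z₀ = (y + k • z₀) + z₀ := by
        rw [succ_nsmul, ← add_assoc]
      rw [e, h2, h1]
  -- conclude w = 0 a.e.
  obtain ⟨r, hr⟩ := hΩb.subset_closedBall 0
  have hz₀pos : 0 < ‖z₀‖ := norm_pos_iff.mpr hz₀ne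
  obtain ⟨k, hk⟩ := exists_nat_gt ((2 * |r| + 1) / ‖z₀‖)
  have hknorm : 2 * |r| + 1 < (k : ℝ) * ‖z₀‖ := by
    rw [div_lt_iff₀ hz₀pos] at hk
    linarith
  have houtm : MeasurableSet {x : Eucl n | x ∉ Ω → w x = 0} := by
    have he : {x : Eucl n | x ∉ Ω → w x = 0} = Ω ∪ {x | w x = 0} := by
      ext x
      by_cases h : x ∈ Ω <;> simp [h]
    rw [he]
    exact hΩm.union (hwmeas (measurableSet_singleton 0))
  have hW := ae_translate houtm hw0 (k • z₀)
  filter_upwards [hiter k, hw0, hW] with y h1 h2 h3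
  have hwy : w y = 0 := by
    by_cases hy : y ∈ Ω
    · have hyr : ‖y‖ ≤ |r| := by
        have := hr hy
        rw [Metric.mem_closedBall, dist_zero_right] at this
        exact this.trans (le_abs_self r)
      have hnsm : ‖y + k • z₀‖ ≥ (k : ℝ) * ‖z₀‖ - ‖y‖ := by
        have h5 : ‖k • z₀‖ = (k : ℝ) * ‖z₀‖ := by
          rw [← Nat.cast_smul_eq_nsmul ℝ k z₀, norm_smul]
          simp
        have h6 : ‖k • z₀‖ - ‖y‖ ≤ ‖y + k • z₀‖ := by
          have := norm_add_le (y + k • z₀) (-y)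
          simp only [add_neg_cancel_comm, norm_neg] at this
          linarith
        linarith
      have hnot : y + k • z₀ ∉ Ω := by
        intro hmem
        have := hr hmem
        rw [Metric.mem_closedBall, dist_zero_right] at this
        have : ‖y + k • z₀‖ ≤ |r| := this.trans (le_abs_self r)
        have habs : |r| ≥ 0 := abs_nonneg r
        linarith
      have h4 := h3 hnot
      rw [← h1, h4]
    · exact h2 hy
  have : -u y ≤ 0 := by
    have h6 : -u y ≤ w y := le_max_left _ _
    linarith [h6, hwy.le]
  linarith
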